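/- For all integers r ≥ 1 and k ≥ 0, (k+3)^{r} + 4(k+2)^{r} + (k+1)^{r} ≥ (3/(r+1)) · ((k+3)^{r+1} - (k+1)^{r+1}). -/
import Mathlib

open Finset

lemma coeff_ineq (r m : ℕ) :
    3 * (1 - (-1:ℝ)^(m+r+1)) * ((r+1).choose m) ≤
      ((r:ℝ)+1) * (1 - (-1:ℝ)^(m+r+1)) * (r.choose m)
        + (if m = r then 4*((r:ℝ)+1) else 0) := by
  rcases eq_or_ne m r with rfl | hm
  · have h : (-1:ℝ)^(m+m+1) = -1 := (Odd.neg_one_pow ⟨m, by ring⟩)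
    simp [h, Nat.choose_self, Nat.choose_succ_self_right]
    ring_nf
    norm_num
  · rcases Nat.even_or_odd (m+r+1) with he | ho
    · have h : (-1:ℝ)^(m+r+1) = 1 := he.neg_one_pow
      simp [h, hm]
    · have h : (-1:ℝ)^(m+r+1) = -1 := ho.neg_one_pow
      rcases le_or_gt m r with hle | hlt
      · have hm2 : m + 3 ≤ r + 1 := by
          rcases ho with ⟨t, ht⟩; omega
        have key : 3 * ((r+1).choose m) ≤ (r+1) * (r.choose m) := by
          have h1 : (r.choose m) * (r+1) = (r+1).choose m * (r+1-m) :=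
            Nat.choose_mul_succ_eq r m
          calc 3 * ((r+1).choose m) ≤ (r+1-m) * ((r+1).choose m) :=
                Nat.mul_le_mul_right _ (by omega)
            _ = (r+1) * (r.choose m) := by rw [mul_comm, ← h1, mul_comm]
        have := (Nat.cast_le (α := ℝ)).2 key
        push_cast at this
        rw [h, if_neg hm]
        ring_nf
        ring_nf at this
        nlinarith
      · obtain ⟨t, ht⟩ := ho
        have h2 : r + 1 < m := by omega
        have e1 : r.choose m = 0 := Nat.choose_eq_zero_of_lt hlt
        have e2 : (r+1).choose m = 0 := Nat.choose_eq_zero_of_lt h2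
        simp [e1, e2, hm]

lemma key_ineq (r : ℕ) (x : ℝ) (hx : 0 ≤ x) :
    3 * ((x+1)^(r+1) - (x-1)^(r+1)) ≤ ((r:ℝ)+1) * ((x+1)^r + 4*x^r + (x-1)^r) := by
  have A : (x+1)^(r+1) - (x-1)^(r+1)
      = ∑ m ∈ range (r+2), (1 - (-1:ℝ)^(m+r+1)) * ((r+1).choose m) * x^m := by
    rw [add_pow, sub_pow, ← Finset.sum_sub_distrib]
    refine Finset.sum_congr rfl fun m hm => ?_
    simp only [one_pow]
    ring
  have B : (x+1)^r + (x-1)^r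
      = ∑ m ∈ range (r+2), (1 - (-1:ℝ)^(m+r+1)) * (r.choose m) * x^m := by
    rw [Finset.sum_range_succ, Nat.choose_succ_self, add_pow, sub_pow,
      ← Finset.sum_add_distrib]
    simp only [Nat.cast_zero, mul_zero, zero_mul, add_zero]
    refine Finset.sum_congr rfl fun m hm => ?_
    have : (-1:ℝ)^(m+r+1) = -(-1:ℝ)^(m+r) := by rw [pow_succ]; ring
    simp only [one_pow, this]
    ring
  have hsum : ∑ m ∈ range (r+2), 3 * ((1 - (-1:ℝ)^(m+r+1)) * ((r+1).choose m) * x^m)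
      ≤ ∑ m ∈ range (r+2), (((r:ℝ)+1) * ((1 - (-1:ℝ)^(m+r+1)) * (r.choose m) * x^m)
          + (if m = r then 4*((r:ℝ)+1)*x^r else 0)) := by
    refine Finset.sum_le_sum fun m hm => ?_
    have hc := coeff_ineq r m
    have hxm : (0:ℝ) ≤ x^m := pow_nonneg hx m
    have h2 := mul_le_mul_of_nonneg_right hc hxm
    by_cases hne : m = r
    · subst hne
      simp only [if_pos rfl, eq_self_iff_true, if_true] at h2 ⊢
      ring_nf at h2 ⊢
      linarith
    · simp only [if_neg hne] at h2 ⊢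
      ring_nf at h2 ⊢
      linarith
  have hite : ∑ m ∈ range (r+2), (if m = r then 4*((r:ℝ)+1)*x^r else 0)
      = 4*((r:ℝ)+1)*x^r := by
    rw [Finset.sum_ite_eq' (range (r+2)) r]
    simp [Nat.lt_succ_iff]
  calc 3 * ((x+1)^(r+1) - (x-1)^(r+1))
      = ∑ m ∈ range (r+2), 3 * ((1 - (-1:ℝ)^(m+r+1)) * ((r+1).choose m) * x^m) := by
        rw [A, Finset.mul_sum]
    _ ≤ _ := hsum
    _ = ((r:ℝ)+1) * ((x+1)^r + (x-1)^r) + 4*((r:ℝ)+1)*x^r := by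
        rw [Finset.sum_add_distrib, hite, B, Finset.mul_sum]
    _ = ((r:ℝ)+1) * ((x+1)^r + 4*x^r + (x-1)^r) := by ring

/-- For all integers `r ≥ 1` and `k ≥ 0`,
`(k+3)^r + 4(k+2)^r + (k+1)^r ≥ (3/(r+1))((k+3)^{r+1} - (k+1)^{r+1})`. -/
theorem three_term_pow_ineq (r k : ℕ) (hr : 1 ≤ r) :
    (3 : ℝ) / ((r : ℝ) + 1) * (((k : ℝ) + 3) ^ (r + 1) - ((k : ℝ) + 1) ^ (r + 1)) ≤
      ((k : ℝ) + 3) ^ r + 4 * ((k : ℝ) + 2) ^ r + ((k : ℝ) + 1) ^ r := by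
  have hrp : (0:ℝ) < (r:ℝ) + 1 := by positivity
  rw [div_mul_eq_mul_div, div_le_iff₀ hrp]
  have h := key_ineq r ((k:ℝ)+2) (by positivity)
  have e1 : (k:ℝ)+2+1 = (k:ℝ)+3 := by ring
  have e2 : (k:ℝ)+2-1 = (k:ℝ)+1 := by ring
  rw [e1, e2] at h
  nlinarith
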